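/- arXiv:1509.02709 — 2 statements merged into one kernel-verified Lean document; each statement's English description precedes it below -/
import Mathlib

section
/- For p ∈ (0,1), the function -1/ln(1-p) satisfies the bounds 1/p - 1 ≤ -1/ln(1-p) ≤ 1/p - 1/2. -/
theorem neg_inv_log_bounds (p : ℝ) (hp : p ∈ Set.Ioo (0 : ℝ) 1) :
    1 / p - 1 ≤ -1 / Real.log (1 - p) ∧
      -1 / Real.log (1 - p) ≤ 1 / p - 1 / 2 := by
  obtain ⟨hp0, hp1⟩ := hp
  have h1p : (0 : ℝ) < 1 - p := by linarith
  -- L = -log(1-p) > 0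
  have hLpos : 0 < -Real.log (1 - p) := by
    have := Real.log_neg h1p (by linarith)
    linarith
  -- upper bound on L : L ≤ p/(1-p)
  have hLub : -Real.log (1 - p) ≤ p / (1 - p) := by
    have := Real.one_sub_inv_le_log_of_pos h1p
    have h : (1 - p)⁻¹ - 1 = p / (1 - p) := by
      field_simp
      ring
    linarith [h ▸ (by linarith : -Real.log (1 - p) ≤ (1 - p)⁻¹ - 1)]
  -- lower bound on L : 2p/(2-p) ≤ L, via the power series
  have hLlb : 2 * p / (2 - p) ≤ -Real.log (1 - p) := by
    have habs : |p| < 1 := by rw [abs_of_pos hp0]; exact hp1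
    have hsum := Real.hasSum_pow_div_log_of_abs_lt_one habs
    have hp2 : |p / 2| < 1 := by rw [abs_of_nonneg (by linarith : (0:ℝ) ≤ p/2)]; linarith
    have hgeom : HasSum (fun n : ℕ => p * (p / 2) ^ n) (2 * p / (2 - p)) := by
      have := (hasSum_geometric_of_abs_lt_one hp2).mul_left p
      convert this using 1
      have h2p : (2:ℝ) - p ≠ 0 := by linarith
      have h2p' : (1:ℝ) - p/2 ≠ 0 := by intro h; apply h2p; linarith
      · rfl
      rw [show (1:ℝ) - p/2 = (2 - p)/2 by ring, inv_div]
      ring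
    refine hasSum_le (fun n => ?_) hgeom hsum
    have hpow : p * (p / 2) ^ n = p ^ (n + 1) / 2 ^ n := by
      rw [div_pow, pow_succ]; ring
    rw [hpow]
    have hn : (n : ℝ) + 1 ≤ 2 ^ n := by
      exact_mod_cast Nat.succ_le_of_lt (Nat.lt_two_pow_self (n := n))
    have hnum : 0 ≤ p ^ (n + 1) := pow_nonneg hp0.le _
    exact div_le_div_of_nonneg_left hnum (by positivity) hn
  constructor
  · -- 1/p - 1 = (1-p)/p ≤ 1/L  ⟺  L ≤ p/(1-p)
    have hrw : -1 / Real.log (1 - p) = 1 / (-Real.log (1 - p)) := by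
      rw [div_neg, neg_div]
    rw [hrw, le_div_iff₀ hLpos]
    have h2 : (1 / p - 1) * -Real.log (1 - p) ≤ (1 / p - 1) * (p / (1 - p)) := by
      apply mul_le_mul_of_nonneg_left hLub
      have : 1 / p - 1 = (1 - p) / p := by field_simp
      rw [this]; positivity
    have h3 : (1 / p - 1) * (p / (1 - p)) = 1 := by
      field_simp
    linarith
  · have hrw : -1 / Real.log (1 - p) = 1 / (-Real.log (1 - p)) := by
      rw [div_neg, neg_div]
    rw [hrw, div_le_iff₀ hLpos]
    have hkey : 0 < 2 - p := by linarith
    have h2 : (1 / p - 1 / 2) * (2 * p / (2 - p)) ≤ (1 / p - 1 / 2) * -Real.log (1 - p) := by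
      apply mul_le_mul_of_nonneg_left hLlb
      have : 1 / p - 1 / 2 = (2 - p) / (2 * p) := by
        rw [div_sub_div _ _ hp0.ne' two_ne_zero, mul_comm]; ring_nf
      rw [this]; positivity
    have h3 : (1 / p - 1 / 2) * (2 * p / (2 - p)) = 1 := by
      field_simp
    linarith
end

section
/- For p ∈ (0,1) and m ≥ 1, the truncated geometric expectation tc(p,m) = (1 - (1-p)^m (pm+1))/(p(1-(1-p)^m)) satisfies 1 ≤ tc(p,m) ≤ min(1/p, (m+1)/2). -/
/-- Truncated geometric expectation. -/
noncomputable def tc (p : ℝ) (m : ℕ) : ℝ :=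
  (1 - (1 - p) ^ m * (p * m + 1)) / (p * (1 - (1 - p) ^ m))

lemma tc_key (p : ℝ) (hp0 : 0 ≤ p) (hp1 : p ≤ 1) (n : ℕ) :
    (1 - p) ^ n * (1 + p * n) ≤ 1 := by
  have h1 : (1:ℝ) + p * n ≤ (1 + p) ^ n := by
    have := one_add_mul_le_pow (a := p) (by linarith) n
    linarith
  have h2 : (0:ℝ) ≤ (1 - p) ^ n := pow_nonneg (by linarith) n
  calc (1 - p) ^ n * (1 + p * n) ≤ (1 - p) ^ n * (1 + p) ^ n :=
        mul_le_mul_of_nonneg_left h1 h2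
    _ = ((1 - p) * (1 + p)) ^ n := (mul_pow _ _ _).symm
    _ ≤ 1 := pow_le_one₀ (by nlinarith) (by nlinarith)

lemma tc_ub2 (p : ℝ) (hp0 : 0 < p) (hp1 : p < 1) :
    ∀ m : ℕ, 1 ≤ m →
      2 * (1 - (1 - p) ^ m * (p * m + 1)) ≤ ((m : ℝ) + 1) * (p * (1 - (1 - p) ^ m)) := by
  intro m hm
  induction m with
  | zero => omega
  | succ n ih =>
    rcases Nat.eq_or_lt_of_le hm with h | h
    · -- n+1 = 1, so n = 0
      have hn : n = 0 := by omega
      subst hn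
      push_cast
      ring_nf
      nlinarith
    · have hn1 : 1 ≤ n := by omega
      have IH := ih hn1
      have key := tc_key p hp0.le hp1.le n
      have hq : (0:ℝ) ≤ (1 - p) ^ n := pow_nonneg (by linarith) n
      push_cast [pow_succ] at *
      nlinarith [mul_nonneg hq hp0.le, mul_nonneg (mul_nonneg hq hp0.le) hp0.le]

theorem tc_bounds (p : ℝ) (hp : p ∈ Set.Ioo (0 : ℝ) 1) (m : ℕ) (hm : 1 ≤ m) :
    1 ≤ tc p m ∧ tc p m ≤ min (1 / p) ((m + 1) / 2) := by
  obtain ⟨hp0, hp1⟩ := hp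
  have hq0 : (0:ℝ) ≤ 1 - p := by linarith
  have hqm1 : (1 - p) ^ m < 1 := pow_lt_one₀ hq0 (by linarith) (by omega)
  have hqm0 : (0:ℝ) ≤ (1 - p) ^ m := pow_nonneg hq0 m
  have hden : 0 < p * (1 - (1 - p) ^ m) := mul_pos hp0 (by linarith)
  refine ⟨?_, le_min ?_ ?_⟩
  · rw [tc, le_div_iff₀ hden]
    -- need p*(1-q^m) ≤ 1 - q^m*(pm+1), i.e. q^m*(pm+1-p) ≤ 1-p
    obtain ⟨n, rfl⟩ : ∃ n, m = n + 1 := ⟨m - 1, by omega⟩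
    have key := tc_key p hp0.le hp1.le n
    have hq : (0:ℝ) ≤ (1 - p) ^ n := pow_nonneg hq0 n
    push_cast [pow_succ] at *
    nlinarith [mul_nonneg hq hp0.le]
  · rw [tc, div_le_div_iff₀ hden hp0]
    have : (0:ℝ) ≤ (1 - p) ^ m * (p * m) :=
      mul_nonneg hqm0 (mul_nonneg hp0.le (Nat.cast_nonneg m))
    nlinarith
  · rw [tc, div_le_iff₀ hden]
    have := tc_ub2 p hp0 hp1 m hm
    nlinarith
end
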